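/- If in a nondegenerate triangle ABC the internal angle bisector from A meets BC at A₁, the internal angle bisector from B meets AC at B₁, and the lengths satisfy dist A A₁ = dist B B₁, then the triangle is isosceles: dist C A = dist C B. (Lehmus–Steiner theorem.) -/

import Mathlib

open EuclideanGeometry

section SteinerLehmusAux

variable {V : Type*} [NormedAddCommGroup V] [InnerProductSpace ℝ V]

lemma steiner_core (u v : V)
    (hpair : ∀ s t : ℝ, s • u + t • v = 0 → s = 0 ∧ t = 0)
    (t : ℝ) (ht0 : 0 < t) (_ht1 : t < 1)
    (hcos : InnerProductGeometry.angle u ((1 - t) • u + t • v)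
      = InnerProductGeometry.angle ((1 - t) • u + t • v) v) :
    ‖(1 - t) • u + t • v‖ ^ 2 * (‖u‖ + ‖v‖) ^ 2 =
      ‖u‖ * ‖v‖ * ((‖u‖ + ‖v‖) ^ 2 - ‖u - v‖ ^ 2) := by
  have hune : u ≠ 0 := fun h0 => by simpa using (hpair 1 0 (by simp [h0])).1
  have hvne : v ≠ 0 := fun h0 => by simpa using (hpair 0 1 (by simp [h0])).2
  have hwne : (1 - t) • u + t • v ≠ 0 := fun h0 => by
    have := (hpair (1 - t) t h0).2; linarith
  have hcpos : 0 < ‖u‖ := norm_pos_iff.mpr hune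
  have hbpos : 0 < ‖v‖ := norm_pos_iff.mpr hvne
  have hwpos : 0 < ‖(1 - t) • u + t • v‖ := norm_pos_iff.mpr hwne
  have hvu : (inner ℝ v u : ℝ) = inner ℝ u v := (real_inner_comm v u).symm
  have hiu : (inner ℝ u ((1 - t) • u + t • v) : ℝ)
      = (1 - t) * ‖u‖ ^ 2 + t * inner ℝ u v := by
    rw [inner_add_right, real_inner_smul_right, real_inner_smul_right,
      real_inner_self_eq_norm_sq]
  have hiv : (inner ℝ ((1 - t) • u + t • v) v : ℝ)
      = (1 - t) * inner ℝ u v + t * ‖v‖ ^ 2 := by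
    rw [inner_add_left, real_inner_smul_left, real_inner_smul_left,
      real_inner_self_eq_norm_sq]
  have hcoseq := congrArg Real.cos hcos
  rw [InnerProductGeometry.cos_angle, InnerProductGeometry.cos_angle, hiu, hiv,
    div_eq_div_iff (by positivity) (by positivity)] at hcoseq
  have hkey : ((1 - t) * ‖u‖ ^ 2 + t * inner ℝ u v) * ‖v‖
      = ((1 - t) * (inner ℝ u v : ℝ) + t * ‖v‖ ^ 2) * ‖u‖ := by
    have h2 : ((1 - t) * ‖u‖ ^ 2 + t * inner ℝ u v) * ‖v‖ * ‖(1 - t) • u + t • v‖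
        = ((1 - t) * (inner ℝ u v : ℝ) + t * ‖v‖ ^ 2) * ‖u‖ * ‖(1 - t) • u + t • v‖ := by
      linarith [hcoseq]
    exact mul_right_cancel₀ (ne_of_gt hwpos) h2
  have hpn : (inner ℝ u v : ℝ) ≠ ‖v‖ * ‖u‖ := by
    intro h0
    have h1 : (inner ℝ u v : ℝ) = ‖u‖ * ‖v‖ := by linarith
    rw [inner_eq_norm_mul_iff_real] at h1
    have h3 : ‖v‖ • u + (-‖u‖) • v = 0 := by rw [neg_smul, h1]; abel
    exact absurd (hpair _ _ h3).1 (ne_of_gt hbpos)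
  have hfac : ((1 - t) * ‖u‖ - t * ‖v‖) * (‖v‖ * ‖u‖ - inner ℝ u v) = 0 := by
    nlinarith [hkey]
  have htc : (1 - t) * ‖u‖ = t * ‖v‖ := by
    rcases mul_eq_zero.mp hfac with h0 | h0
    · linarith
    · exact absurd (by linarith : (inner ℝ u v : ℝ) = ‖v‖ * ‖u‖) hpn
  have htval : t = ‖u‖ / (‖v‖ + ‖u‖) := by
    field_simp
    linarith [htc]
  have hww : ‖(1 - t) • u + t • v‖ ^ 2
      = (1 - t) ^ 2 * ‖u‖ ^ 2 + 2 * (t * (1 - t) * inner ℝ u v) + t ^ 2 * ‖v‖ ^ 2 := by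
    rw [← real_inner_self_eq_norm_sq]
    simp only [inner_add_left, inner_add_right]
    simp only [real_inner_smul_left, real_inner_smul_right]
    simp only [real_inner_self_eq_norm_sq, hvu]
    ring
  have huv : ‖u - v‖ ^ 2 = ‖u‖ ^ 2 - 2 * inner ℝ u v + ‖v‖ ^ 2 := norm_sub_sq_real u v
  rw [hww, huv, htval]
  have hbc : ‖v‖ + ‖u‖ ≠ 0 := by positivity
  field_simp
  ring

lemma steiner_aux_li (A B C : EuclideanSpace ℝ (Fin 2))
    (h : AffineIndependent ℝ ![A, B, C]) :
    LinearIndependent ℝ ![B - A, C - A] := by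
  have h0 := (affineIndependent_iff_linearIndependent_vsub ℝ ![A, B, C] 0).mp h
  have h2 := h0.comp (finSuccAboveEquiv (0 : Fin 3))
    (finSuccAboveEquiv (0 : Fin 3)).injective
  convert h2 using 1
  case e'_5 => rfl
  funext i
  fin_cases i <;> rfl

/-- Squared length of the internal bisector from `A` meeting `BC` at `P`. -/
lemma steiner_bisector_sq (A B C P : EuclideanSpace ℝ (Fin 2))
    (h : AffineIndependent ℝ ![A, B, C])
    (hP : P ∈ openSegment ℝ B C)
    (hbis : ∠ B A P = ∠ P A C) :
    dist A P ^ 2 * (dist A B + dist A C) ^ 2 =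
      dist A B * dist A C * ((dist A B + dist A C) ^ 2 - dist B C ^ 2) := by
  have hpair := LinearIndependent.pair_iff.mp (steiner_aux_li A B C h)
  rw [openSegment_eq_image] at hP
  obtain ⟨t, ⟨ht0, ht1⟩, hPt⟩ := hP
  have hw : P - A = (1 - t) • (B - A) + t • (C - A) := by
    rw [← hPt]; show ((1 - t) • B + t • C) - A = _; module
  have hcos : InnerProductGeometry.angle (B - A) ((1 - t) • (B - A) + t • (C - A))
      = InnerProductGeometry.angle ((1 - t) • (B - A) + t • (C - A)) (C - A) := by
    rw [← hw]
    exact hbis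
  have hmain := steiner_core (B - A) (C - A) hpair t ht0 ht1 hcos
  have e1 : dist A P = ‖P - A‖ := by rw [dist_eq_norm, norm_sub_rev]
  have e2 : dist A B = ‖B - A‖ := by rw [dist_eq_norm, norm_sub_rev]
  have e3 : dist A C = ‖C - A‖ := by rw [dist_eq_norm, norm_sub_rev]
  have e4 : dist B C = ‖(B - A) - (C - A)‖ := by rw [dist_eq_norm]; congr 1; abel
  rw [e1, e2, e3, e4, hw]
  exact hmain

end SteinerLehmusAux

/-- **Lehmus–Steiner theorem.** If in a nondegenerate triangle `ABC` the internal angle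
bisector from `A` meets `BC` at `A₁`, the internal angle bisector from `B` meets `AC` at
`B₁`, and `dist A A₁ = dist B B₁`, then the triangle is isosceles: `dist C A = dist C B`. -/
theorem lehmus_steiner (A B C A₁ B₁ : EuclideanSpace ℝ (Fin 2))
    (hABC : AffineIndependent ℝ ![A, B, C])
    (hA₁ : A₁ ∈ openSegment ℝ B C)
    (hbisA : ∠ B A A₁ = ∠ A₁ A C)
    (hB₁ : B₁ ∈ openSegment ℝ A C)
    (hbisB : ∠ A B B₁ = ∠ B₁ B C)
    (hlen : dist A A₁ = dist B B₁) :
    dist C A = dist C B := by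
  have hBAC : AffineIndependent ℝ ![B, A, C] := by
    rw [affineIndependent_iff_not_collinear_set]
    intro hc
    exact (affineIndependent_iff_not_collinear_set.mp hABC)
      (by rwa [Set.insert_comm] at hc)
  have h1 := steiner_bisector_sq A B C A₁ hABC hA₁ hbisA
  have h2 := steiner_bisector_sq B A C B₁ hBAC hB₁ hbisB
  rw [dist_comm B A, ← hlen] at h2
  set a := dist B C with ha'
  set b := dist A C with hb'
  set c := dist A B with hc'
  have hAB : A ≠ B := by
    intro h0
    exact (hABC.injective.ne (show (0 : Fin 3) ≠ 1 by decide)) (by simpa using h0)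
  have hBC : B ≠ C := by
    intro h0
    exact (hABC.injective.ne (show (1 : Fin 3) ≠ 2 by decide)) (by simpa using h0)
  have hAC : A ≠ C := by
    intro h0
    exact (hABC.injective.ne (show (0 : Fin 3) ≠ 2 by decide)) (by simpa using h0)
  have hapos : 0 < a := dist_pos.mpr hBC
  have hbpos : 0 < b := dist_pos.mpr hAC
  have hcpos : 0 < c := dist_pos.mpr hAB
  have hfac : c * ((b - a) * (c ^ 4 + 2 * b * c ^ 3 + b ^ 2 * c ^ 2 + 2 * a * c ^ 3
      + 5 * a * b * c ^ 2 + 4 * a * b ^ 2 * c + a * b ^ 3 + a ^ 2 * c ^ 2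
      + 4 * a ^ 2 * b * c + 2 * a ^ 2 * b ^ 2 + a ^ 3 * b)) = 0 := by
    linear_combination (b + c) ^ 2 * h2 - (a + c) ^ 2 * h1
  have hQpos : 0 < c ^ 4 + 2 * b * c ^ 3 + b ^ 2 * c ^ 2 + 2 * a * c ^ 3
      + 5 * a * b * c ^ 2 + 4 * a * b ^ 2 * c + a * b ^ 3 + a ^ 2 * c ^ 2
      + 4 * a ^ 2 * b * c + 2 * a ^ 2 * b ^ 2 + a ^ 3 * b := by positivity
  have hba : b - a = 0 := by
    by_contra h5
    exact (mul_ne_zero (ne_of_gt hcpos) (mul_ne_zero h5 (ne_of_gt hQpos))) hfac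
  rw [dist_comm C A, dist_comm C B, ← hb', ← ha']
  linarith
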